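/- If t ≥ 2/3, then the hypersurface model {Re w = |z|⁴ + 2t·Re(z³·conj z)} ⊂ ℂ² is not admissible: for every c ∈ ℝ, every V ∈ ℂ∖{0}, and every polynomial Q ∈ ℂ[X] satisfying ζ³ · c · (4(1−ζ)(1−conj ζ)·V·conj V + 3t(1−ζ)²V² + 3t(1−conj ζ)²(conj V)²) = (1−conj ζ)² · Q(ζ) for all |ζ| = 1, there exists ζ₀ with |ζ₀| = 1 and Q(ζ₀) = 0. -/

import Mathlib

open ComplexConjugate

noncomputable section

theorem stmt5 (t : ℝ) (ht0 : 0 < t) (ht : 2 / 3 ≤ t) :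
    ∀ (c : ℝ) (V : ℂ), V ≠ 0 → ∀ Q : Polynomial ℂ,
      (∀ ζ : ℂ, ‖ζ‖ = 1 →
        ζ ^ 3 * (c : ℂ) *
            (4 * (1 - ζ) * (1 - conj ζ) * V * conj V +
              3 * (t : ℂ) * (1 - ζ) ^ 2 * V ^ 2 +
              3 * (t : ℂ) * (1 - conj ζ) ^ 2 * (conj V) ^ 2)
          = (1 - conj ζ) ^ 2 * Q.eval ζ) →
      ∃ ζ₀ : ℂ, ‖ζ₀‖ = 1 ∧ Q.eval ζ₀ = 0 := by
  intro c V hV Q hQ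
  have ht4 : (9 : ℝ) * t ^ 2 - 4 ≥ 0 := by nlinarith
  set s : ℝ := Real.sqrt (9 * t ^ 2 - 4) with hs
  have hs2 : s ^ 2 = 9 * t ^ 2 - 4 := Real.sq_sqrt ht4
  have hsC : (s : ℂ) ^ 2 = 9 * (t : ℂ) ^ 2 - 4 := by
    have := congrArg (fun x : ℝ => (x : ℂ)) hs2
    push_cast at this
    exact this
  have htC : (3 : ℂ) * (t : ℂ) ≠ 0 := by
    simp only [ne_eq, mul_eq_zero, not_or]
    exact ⟨by norm_num, by exact_mod_cast ht0.ne'⟩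
  set u : ℂ := (2 + (s : ℂ) * Complex.I) / (3 * (t : ℂ)) with hu
  have hu' : u * (3 * (t : ℂ)) = 2 + (s : ℂ) * Complex.I := by
    rw [hu]; exact div_mul_cancel₀ _ htC
  have key : 3 * (t : ℂ) * u ^ 2 - 4 * u + 3 * (t : ℂ) = 0 := by
    have h2 : (3 * (t : ℂ)) * (3 * (t : ℂ)) * (3 * (t : ℂ) * u ^ 2 - 4 * u + 3 * (t : ℂ)) = 0 := by
      linear_combination (3 * (t:ℂ) * (u * (3 * (t:ℂ)) + (2 + (s:ℂ) * Complex.I) - 4)) * hu' +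
        (-3 * (t:ℂ)) * hsC + (3 * (t:ℂ) * (s:ℂ) ^ 2) * Complex.I_sq
    exact (mul_eq_zero.mp h2).resolve_left (mul_ne_zero htC htC)
  have hu_norm : ‖u‖ = 1 := by
    have h1 : Complex.normSq (2 + (s : ℂ) * Complex.I) = 9 * t ^ 2 := by
      simp [Complex.normSq_apply]
      nlinarith
    have h2 : ‖(2 + (s : ℂ) * Complex.I)‖ = 3 * t := by
      rw [Complex.norm_def, h1]
      rw [show (9:ℝ) * t ^2 = (3*t)^2 by ring]
      exact Real.sqrt_sq (by positivity)
    rw [hu, norm_div, h2]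
    have : ‖(3 : ℂ) * (t : ℂ)‖ = 3 * t := by
      rw [norm_mul]
      simp [Complex.norm_real, abs_of_pos ht0]
    rw [this, div_self (by positivity)]
  set ζ₀ : ℂ := (conj V / V) * u with hζ₀
  have hζ₀_norm : ‖ζ₀‖ = 1 := by
    have hcn : ‖(starRingEnd ℂ) V‖ = ‖V‖ := by
      simp [Complex.norm_conj]
    rw [hζ₀, norm_mul, norm_div, hcn, div_self (norm_ne_zero_iff.mpr hV), one_mul, hu_norm]
  -- the model polynomial
  set R : Polynomial ℂ :=
      Polynomial.C (c : ℂ) *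
        (Polynomial.C (3 * (t : ℂ)) * Polynomial.C (V ^ 2) * Polynomial.X ^ 5 -
          4 * Polynomial.C (V * conj V) * Polynomial.X ^ 4 +
          Polynomial.C (3 * (t : ℂ)) * Polynomial.C ((conj V) ^ 2) * Polynomial.X ^ 3) with hR
  have hReval : ∀ z : ℂ, R.eval z =
      (c : ℂ) * (3 * (t:ℂ) * V ^ 2 * z ^ 5 - 4 * (V * conj V) * z ^ 4 +
        3 * (t:ℂ) * (conj V) ^ 2 * z ^ 3) := by
    intro z
    simp only [hR, Polynomial.eval_mul, Polynomial.eval_add, Polynomial.eval_sub,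
      Polynomial.eval_pow, Polynomial.eval_C, Polynomial.eval_X, Polynomial.eval_ofNat]
    try ring
  -- Q agrees with R on the circle minus {1}
  have hagree : ∀ ζ : ℂ, ‖ζ‖ = 1 → ζ ≠ 1 → Q.eval ζ = R.eval ζ := by
    intro ζ hn h1
    have hζ0 : ζ ≠ 0 := by
      intro h; rw [h] at hn; simp at hn
    have hconj : conj ζ = ζ⁻¹ := (Complex.inv_eq_conj hn).symm
    have hne : (1 - conj ζ) ≠ 0 := by
      intro h
      apply h1
      have : conj ζ = 1 := by linear_combination -h
      have := congrArg conj this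
      simpa using this
    have h2 : (1 - conj ζ) ^ 2 * R.eval ζ =
        ζ ^ 3 * (c : ℂ) *
            (4 * (1 - ζ) * (1 - conj ζ) * V * conj V +
              3 * (t : ℂ) * (1 - ζ) ^ 2 * V ^ 2 +
              3 * (t : ℂ) * (1 - conj ζ) ^ 2 * (conj V) ^ 2) := by
      rw [hReval, hconj]
      field_simp
      ring
    have h3 := hQ ζ hn
    have h4 : (1 - conj ζ) ^ 2 * Q.eval ζ = (1 - conj ζ) ^ 2 * R.eval ζ := by
      rw [← h3, h2]
    exact mul_left_cancel₀ (pow_ne_zero 2 hne) h4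
  -- infinitely many common points force Q = R
  have hQR : Q = R := by
    have hsub : Q - R = 0 := by
      apply Polynomial.eq_zero_of_infinite_isRoot
      have hmaps : Set.MapsTo (fun θ : ℝ => Complex.exp (θ * Complex.I)) (Set.Ioo 0 1)
          {x | (Q - R).IsRoot x} := by
        intro θ hθ
        obtain ⟨hθ0, hθ1⟩ := hθ
        have hn : ‖Complex.exp (θ * Complex.I)‖ = 1 := by
          exact Complex.norm_exp_ofReal_mul_I θ
        have h1 : Complex.exp ((θ:ℂ) * Complex.I) ≠ 1 := by
          rw [ne_eq, Complex.exp_eq_one_iff]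
          rintro ⟨n, hn'⟩
          have him := congrArg Complex.im hn'
          simp [Complex.mul_I_im] at him
          rcases lt_trichotomy (n : ℝ) 0 with h | h | h
          · have hn1 : n < 0 := by exact_mod_cast h
            have : (n : ℝ) ≤ -1 := by exact_mod_cast (by omega : n ≤ -1)
            nlinarith [Real.pi_gt_three]
          · rw [h] at him; simp at him; linarith
          · have hn1 : 0 < n := by exact_mod_cast h
            have : (1 : ℝ) ≤ (n : ℝ) := by exact_mod_cast (by omega : 1 ≤ n)
            nlinarith [Real.pi_gt_three]
        simp only [Set.mem_setOf_eq, Polynomial.IsRoot, Polynomial.eval_sub]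
        rw [hagree _ hn h1, sub_self]
      have hinj : Set.InjOn (fun θ : ℝ => Complex.exp (θ * Complex.I)) (Set.Ioo 0 1) := by
        intro a ha b hb hab
        simp only at hab
        rw [Complex.exp_eq_exp_iff_exists_int] at hab
        obtain ⟨n, hn'⟩ := hab
        have him := congrArg Complex.im hn'
        simp [Complex.mul_I_im] at him
        obtain ⟨ha0, ha1⟩ := ha
        obtain ⟨hb0, hb1⟩ := hb
        have hn0 : (n : ℝ) = 0 := by
          rcases lt_trichotomy (n : ℝ) 0 with h | h | h
          · have hn1 : n < 0 := by exact_mod_cast h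
            have : (n : ℝ) ≤ -1 := by exact_mod_cast (by omega : n ≤ -1)
            nlinarith [Real.pi_gt_three]
          · exact h
          · have hn1 : 0 < n := by exact_mod_cast h
            have : (1 : ℝ) ≤ (n : ℝ) := by exact_mod_cast (by omega : 1 ≤ n)
            nlinarith [Real.pi_gt_three]
        rw [hn0] at him
        simpa using him
      exact ((Set.Ioo_infinite (show (0:ℝ) < 1 by norm_num)).image hinj).mono
        hmaps.image_subset
    exact sub_eq_zero.mp hsub
  -- evaluate at ζ₀
  have hVζ : V * ζ₀ = conj V * u := by
    rw [hζ₀]; field_simp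
  have hR0 : R.eval ζ₀ = 0 := by
    rw [hReval]
    linear_combination ((c:ℂ) * ζ₀ ^ 3 * (conj V) ^ 2) * key +
      ((c:ℂ) * ζ₀ ^ 3 * (3 * (t:ℂ) * (V * ζ₀ + conj V * u) - 4 * conj V)) * hVζ
  exact ⟨ζ₀, hζ₀_norm, by rw [hQR]; exact hR0⟩
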